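/- For λ > 0, λ̂ > 0 with λ̂ ≠ r and λ̂ ≠ αr, r > 0, α > 1, t > 0: λ²·∫₀ᵗ∫₀^{t−v}( e^{−rv}·e^{−αr(u+v)} + e^{−r(u+v)}·e^{−αru} )·(1 − e^{−λ̂u}) du dv = λ²(1−e^{−rt})(1−e^{−αrt})/(αr²) + λ²e^{−(αr+λ̂)t}(1−e^{−(r−λ̂)t})/((r−λ̂)(αr+λ̂)) + λ²e^{−rt}(1−e^{−(αr+λ̂)t})/((αr+λ̂)(r+αr+λ̂)) − λ²(1−e^{−(α+1)rt})/((α+1)r(αr+λ̂)) − λ²(1−e^{−rt})/(r(r+αr+λ̂)). -/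

import Mathlib

lemma iexp (c a b : ℝ) (hc : c ≠ 0) :
    ∫ x in a..b, Real.exp (c*x) = (Real.exp (c*b) - Real.exp (c*a))/c := by
  have h : ∀ x ∈ Set.uIcc a b, HasDerivAt (fun y => Real.exp (c*y)/c) (Real.exp (c*x)) x := by
    intro x _
    have h1 : HasDerivAt (fun y : ℝ => c*y) c x := by
      simpa using (hasDerivAt_id x).const_mul c
    have h3 := ((Real.hasDerivAt_exp (c*x)).comp x h1).div_const c
    have : Real.exp (c*x) * c / c = Real.exp (c*x) := by field_simp
    rw [this] at h3
    exact h3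
  rw [intervalIntegral.integral_eq_sub_of_hasDerivAt h
    (((Real.continuous_exp.comp (continuous_const.mul continuous_id)).intervalIntegrable a b))]
  ring

lemma iint (k c a b : ℝ) : IntervalIntegrable (fun x => k * Real.exp (c*x))
    MeasureTheory.volume a b :=
  (continuous_const.mul (Real.continuous_exp.comp (continuous_const.mul continuous_id))).intervalIntegrable a b

lemma icomb (k1 k2 c1 c2 c3 c4 a b : ℝ) (h1 : c1 ≠ 0) (h2 : c2 ≠ 0) (h3 : c3 ≠ 0)
    (h4 : c4 ≠ 0) :
    ∫ x in a..b, (k1*Real.exp (c1*x) - k1*Real.exp (c2*x) + k2*Real.exp (c3*x)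
        - k2*Real.exp (c4*x))
      = k1*((Real.exp (c1*b)-Real.exp (c1*a))/c1) - k1*((Real.exp (c2*b)-Real.exp (c2*a))/c2)
        + k2*((Real.exp (c3*b)-Real.exp (c3*a))/c3)
        - k2*((Real.exp (c4*b)-Real.exp (c4*a))/c4) := by
  rw [intervalIntegral.integral_sub (((iint k1 c1 a b).sub (iint k1 c2 a b)).add (iint k2 c3 a b))
      (iint k2 c4 a b),
    intervalIntegral.integral_add ((iint k1 c1 a b).sub (iint k1 c2 a b)) (iint k2 c3 a b),
    intervalIntegral.integral_sub (iint k1 c1 a b) (iint k1 c2 a b),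
    intervalIntegral.integral_const_mul, intervalIntegral.integral_const_mul,
    intervalIntegral.integral_const_mul, intervalIntegral.integral_const_mul,
    iexp c1 a b h1, iexp c2 a b h2, iexp c3 a b h3, iexp c4 a b h4]

lemma icomb5 (K1 K2 K3 K4 K5 d1 d2 d3 d4 d5 a b : ℝ) (h1 : d1 ≠ 0) (h2 : d2 ≠ 0)
    (h3 : d3 ≠ 0) (h4 : d4 ≠ 0) (h5 : d5 ≠ 0) :
    ∫ x in a..b, (K1*Real.exp (d1*x) + K2*Real.exp (d2*x) + K3*Real.exp (d3*x)
        + K4*Real.exp (d4*x) + K5*Real.exp (d5*x))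
      = K1*((Real.exp (d1*b)-Real.exp (d1*a))/d1) + K2*((Real.exp (d2*b)-Real.exp (d2*a))/d2)
        + K3*((Real.exp (d3*b)-Real.exp (d3*a))/d3) + K4*((Real.exp (d4*b)-Real.exp (d4*a))/d4)
        + K5*((Real.exp (d5*b)-Real.exp (d5*a))/d5) := by
  rw [intervalIntegral.integral_add
      ((((iint K1 d1 a b).add (iint K2 d2 a b)).add (iint K3 d3 a b)).add (iint K4 d4 a b))
      (iint K5 d5 a b),
    intervalIntegral.integral_add (((iint K1 d1 a b).add (iint K2 d2 a b)).add (iint K3 d3 a b))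
      (iint K4 d4 a b),
    intervalIntegral.integral_add ((iint K1 d1 a b).add (iint K2 d2 a b)) (iint K3 d3 a b),
    intervalIntegral.integral_add (iint K1 d1 a b) (iint K2 d2 a b),
    intervalIntegral.integral_const_mul, intervalIntegral.integral_const_mul,
    intervalIntegral.integral_const_mul, intervalIntegral.integral_const_mul,
    intervalIntegral.integral_const_mul,
    iexp d1 a b h1, iexp d2 a b h2, iexp d3 a b h3, iexp d4 a b h4, iexp d5 a b h5]

set_option maxHeartbeats 2000000 in
theorem stmt_12 (lam lamhat r α t : ℝ) (hlam : 0 < lam) (hlamhat : 0 < lamhat)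
    (hr : 0 < r) (hα : 1 < α) (hne1 : lamhat ≠ r) (hne2 : lamhat ≠ α * r) (ht : 0 < t) :
    lam ^ 2 * ∫ v in (0:ℝ)..t, ∫ u in (0:ℝ)..(t - v),
        (Real.exp (-r * v) * Real.exp (-α * r * (u + v)) +
         Real.exp (-r * (u + v)) * Real.exp (-α * r * u)) * (1 - Real.exp (-lamhat * u))
      = lam ^ 2 * (1 - Real.exp (-r * t)) * (1 - Real.exp (-α * r * t)) / (α * r ^ 2)
        + lam ^ 2 * Real.exp (-(α * r + lamhat) * t) * (1 - Real.exp (-(r - lamhat) * t))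
            / ((r - lamhat) * (α * r + lamhat))
        + lam ^ 2 * Real.exp (-r * t) * (1 - Real.exp (-(α * r + lamhat) * t))
            / ((α * r + lamhat) * (r + α * r + lamhat))
        - lam ^ 2 * (1 - Real.exp (-(α + 1) * r * t)) / ((α + 1) * r * (α * r + lamhat))
        - lam ^ 2 * (1 - Real.exp (-r * t)) / (r * (r + α * r + lamhat)) := by
  have hα0 : (0:ℝ) < α := lt_trans one_pos hα
  have hA : (0:ℝ) < α*r := mul_pos hα0 hr
  have hA'ne : α*r ≠ 0 := ne_of_gt hA
  have hAne : -(α*r) ≠ 0 := neg_ne_zero.mpr hA'ne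
  have hBne : -(α*r)-lamhat ≠ 0 := by nlinarith
  have hCne : -(α*r)-r ≠ 0 := by nlinarith
  have hDne : -(α*r)-r-lamhat ≠ 0 := by nlinarith
  have hrne : -r ≠ 0 := neg_ne_zero.mpr (ne_of_gt hr)
  have hlrne : lamhat - r ≠ 0 := sub_ne_zero.mpr hne1
  have hB'ne : α*r+lamhat ≠ 0 := by positivity
  -- inner integral
  have inner : ∀ v : ℝ, (∫ u in (0:ℝ)..(t - v),
      (Real.exp (-r * v) * Real.exp (-α * r * (u + v)) +
       Real.exp (-r * (u + v)) * Real.exp (-α * r * u)) * (1 - Real.exp (-lamhat * u)))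
      = (Real.exp (-(α*r)*v) * Real.exp (-r*v)) * ((Real.exp ((-(α*r))*(t-v)) - 1)/(-(α*r)))
        - (Real.exp (-(α*r)*v) * Real.exp (-r*v)) * ((Real.exp ((-(α*r)-lamhat)*(t-v)) - 1)/(-(α*r)-lamhat))
        + Real.exp (-r*v) * ((Real.exp ((-(α*r)-r)*(t-v)) - 1)/(-(α*r)-r))
        - Real.exp (-r*v) * ((Real.exp ((-(α*r)-r-lamhat)*(t-v)) - 1)/(-(α*r)-r-lamhat)) := by
    intro v
    have e1 : (∫ u in (0:ℝ)..(t - v),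
        (Real.exp (-r * v) * Real.exp (-α * r * (u + v)) +
         Real.exp (-r * (u + v)) * Real.exp (-α * r * u)) * (1 - Real.exp (-lamhat * u)))
        = ∫ u in (0:ℝ)..(t - v),
          ((Real.exp (-(α*r)*v) * Real.exp (-r*v)) * Real.exp ((-(α*r))*u)
          - (Real.exp (-(α*r)*v) * Real.exp (-r*v)) * Real.exp ((-(α*r)-lamhat)*u)
          + Real.exp (-r*v) * Real.exp ((-(α*r)-r)*u)
          - Real.exp (-r*v) * Real.exp ((-(α*r)-r-lamhat)*u)) := by
      apply intervalIntegral.integral_congr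
      intro u _
      simp only
      rw [show -α*r*(u+v) = -(α*r*u) + -(α*r*v) by ring, Real.exp_add,
        show -r*(u+v) = -(r*u) + -(r*v) by ring, Real.exp_add,
        show -α*r*u = -(α*r*u) by ring, show -lamhat*u = -(lamhat*u) by ring,
        show -r*v = -(r*v) by ring,
        show -(α*r)*v = -(α*r*v) by ring, show (-(α*r))*u = -(α*r*u) by ring,
        show (-(α*r)-lamhat)*u = -(α*r*u) + -(lamhat*u) by ring, Real.exp_add,
        show (-(α*r)-r)*u = -(α*r*u) + -(r*u) by ring, Real.exp_add,
        show (-(α*r)-r-lamhat)*u = -(α*r*u) + (-(r*u) + -(lamhat*u)) by ring,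
        Real.exp_add, Real.exp_add]
      ring
    rw [e1, icomb _ _ _ _ _ _ 0 (t-v) hAne hBne hCne hDne]
    simp only [mul_zero, Real.exp_zero]
  have houter : (∫ v in (0:ℝ)..t, ∫ u in (0:ℝ)..(t - v),
      (Real.exp (-r * v) * Real.exp (-α * r * (u + v)) +
       Real.exp (-r * (u + v)) * Real.exp (-α * r * u)) * (1 - Real.exp (-lamhat * u)))
      = ∫ v in (0:ℝ)..t,
        ((1/(α*r) - 1/(α*r+lamhat)) * Real.exp ((-(α*r)-r)*v)
        + (-Real.exp (-(α*r*t))/(α*r) + 1/(α*r+r) - 1/(α*r+r+lamhat)) * Real.exp ((-r)*v)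
        + (Real.exp (-(α*r*t) + -(lamhat*t))/(α*r+lamhat)) * Real.exp ((lamhat-r)*v)
        + (-Real.exp (-(α*r*t) + -(r*t))/(α*r+r)) * Real.exp ((α*r)*v)
        + (Real.exp (-(α*r*t) + -(r*t) + -(lamhat*t))/(α*r+r+lamhat)) * Real.exp ((α*r+lamhat)*v)) := by
    apply intervalIntegral.integral_congr
    intro v _
    simp only
    rw [inner v]
    rw [show (-(α*r))*(t-v) = -(α*r*t) + α*r*v by ring,
      show (-(α*r)-lamhat)*(t-v) = -(α*r*t) + -(lamhat*t) + (α*r*v + lamhat*v) by ring,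
      show (-(α*r)-r)*(t-v) = -(α*r*t) + -(r*t) + (α*r*v + r*v) by ring,
      show (-(α*r)-r-lamhat)*(t-v) = -(α*r*t) + -(r*t) + -(lamhat*t) + (α*r*v + r*v + lamhat*v) by ring,
      show -(α*r)*v = -(α*r*v) by ring,
      show (-(α*r)-r)*v = -(α*r*v) + -(r*v) by ring,
      show -r*v = -(r*v) by ring,
      show (lamhat-r)*v = lamhat*v + -(r*v) by ring,
      show (α*r+lamhat)*v = α*r*v + lamhat*v by ring]
    simp only [Real.exp_neg, Real.exp_add]
    have h1 := Real.exp_ne_zero (α*r*v)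
    have h2 := Real.exp_ne_zero (r*v)
    have h3 := Real.exp_ne_zero (lamhat*v)
    have hC'ne : α*r+r ≠ 0 := by positivity
    have hD'ne : α*r+r+lamhat ≠ 0 := by positivity
    simp only [show -(α*r)-r = -(α*r+r) by ring, show -(α*r+r)-lamhat = -(α*r+r+lamhat) by ring,
      show -(α*r)-lamhat = -(α*r+lamhat) by ring, div_neg]
    field_simp
    ring
  rw [houter, icomb5 _ _ _ _ _ _ _ _ _ _ 0 t hCne hrne hlrne hA'ne hB'ne]
  simp only [mul_zero, Real.exp_zero]
  rw [show ((-(α*r)-r)*t) = -(α*r*t) + -(r*t) by ring,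
    show (lamhat-r)*t = lamhat*t + -(r*t) by ring,
    show (α*r+lamhat)*t = α*r*t + lamhat*t by ring,
    show -(α*r+lamhat)*t = -(α*r*t) + -(lamhat*t) by ring,
    show -(r-lamhat)*t = lamhat*t + -(r*t) by ring,
    show -(α+1)*r*t = -(α*r*t) + -(r*t) by ring,
    show -r*t = -(r*t) by ring, show -α*r*t = -(α*r*t) by ring]
  simp only [Real.exp_add, Real.exp_neg]
  have h1 := Real.exp_ne_zero (α*r*t)
  have h2 := Real.exp_ne_zero (r*t)
  have h3 := Real.exp_ne_zero (lamhat*t)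
  have hrne' : r ≠ 0 := ne_of_gt hr
  have hC'ne : α*r+r ≠ 0 := by positivity
  have hD'ne : α*r+r+lamhat ≠ 0 := by positivity
  have hrl : r - lamhat ≠ 0 := sub_ne_zero.mpr (Ne.symm hne1)
  have hα1 : α+1 ≠ 0 := by positivity
  have hrAl : r + α*r + lamhat ≠ 0 := by positivity
  simp only [show -(α*r)-r = -(α*r+r) by ring, show -(α*r+r)-lamhat = -(α*r+r+lamhat) by ring,
    show -(α*r)-lamhat = -(α*r+lamhat) by ring, div_neg]
  field_simp
  ring
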